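/- For the wave operator in ℝ^{1+n} with r < t, s² = t² − r², and real parameters α, β, the following decomposition holds for C² functions u: □u = (t−r)^{-β} t^{-α} ((s/t)²∂_t + (2x^a/t)∂̲_a)((t−r)^β t^α ∂_t u) + p_{n,α,β}(t,r) ∂_t u − Σ_a ∂̲_a ∂̲_a u, where ∂̲_a = (x^a/t)∂_t + ∂_a and p_{n,α,β}(t,r) = ((n−α) − (α+1)(r/t)² − β(t−r)/t) t^{-1}. -/

import Mathlib

noncomputable section

/-- Partial derivative in the `i`-th coordinate direction on `ℝ^m`. -/
def pd {m : ℕ} (u : (Fin m → ℝ) → ℝ) (i : Fin m) (x : Fin m → ℝ) : ℝ :=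
  fderiv ℝ u x (Pi.single i 1)

/-- `r = |x|` on `ℝ^{1+n}` (index `0` is time). -/
def rfun {n : ℕ} (p : Fin (n + 1) → ℝ) : ℝ :=
  Real.sqrt (∑ a : Fin n, (p a.succ) ^ 2)

/-- Hyperbolic derivative `∂̲_a = (x^a/t)∂_t + ∂_a`. -/
def Da {n : ℕ} (a : Fin n) (f : (Fin (n + 1) → ℝ) → ℝ) (p : Fin (n + 1) → ℝ) : ℝ :=
  (p a.succ / p 0) * pd f 0 p + pd f a.succ p

/-- D'Alembert operator on `ℝ^{1+n}`. -/
def Box {n : ℕ} (u : (Fin (n + 1) → ℝ) → ℝ) (p : Fin (n + 1) → ℝ) : ℝ :=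
  pd (pd u 0) 0 p - ∑ a : Fin n, pd (pd u a.succ) a.succ p

lemma hasFDerivAt_rfun {n : ℕ} (q : Fin (n + 1) → ℝ) (hq : 0 < rfun q) :
    HasFDerivAt (rfun (n := n))
      ((1 / (2 * rfun q)) • ∑ a : Fin n, (2 * q a.succ) •
        (ContinuousLinearMap.proj a.succ : (Fin (n + 1) → ℝ) →L[ℝ] ℝ)) q := by
  have hS : HasFDerivAt (fun x : Fin (n + 1) → ℝ => ∑ a : Fin n, (x a.succ) ^ 2)
      (∑ a : Fin n, (2 * q a.succ) •
        (ContinuousLinearMap.proj a.succ : (Fin (n + 1) → ℝ) →L[ℝ] ℝ)) q := by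
    apply HasFDerivAt.fun_sum
    intro a _
    have h := (hasFDerivAt_apply (𝕜 := ℝ) a.succ q).mul (hasFDerivAt_apply (𝕜 := ℝ) a.succ q)
    simp only [pow_two, two_mul, add_smul]
    exact h
  have hSq : (0 : ℝ) < ∑ a : Fin n, (q a.succ) ^ 2 := Real.sqrt_pos.mp hq
  have h2 := hS.sqrt hSq.ne'
  exact h2

set_option maxHeartbeats 2000000 in
/-- weighted decomposition of the wave operator in `{0 < r < t}`:
`□u = (t−r)^{-β}t^{-α}((s/t)²∂_t + (2x^a/t)∂̲_a)((t−r)^β t^α ∂_t u)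
  + p_{n,α,β}(t,r)∂_t u − Σ_a ∂̲_a∂̲_a u`. -/
theorem weighted_wave_decomposition
    (n : ℕ) (hn : 1 ≤ n) (α β : ℝ)
    (u : (Fin (n + 1) → ℝ) → ℝ) (hu : ContDiff ℝ 2 u)
    (p : Fin (n + 1) → ℝ) (h0 : 0 < rfun p) (hp : rfun p < p 0) :
    Box u p =
      (p 0 - rfun p) ^ (-β) * (p 0) ^ (-α) *
          (((p 0 ^ 2 - rfun p ^ 2) / p 0 ^ 2) *
              pd (fun q => (q 0 - rfun q) ^ β * (q 0) ^ α * pd u 0 q) 0 p +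
            ∑ a : Fin n, (2 * p a.succ / p 0) *
              Da a (fun q => (q 0 - rfun q) ^ β * (q 0) ^ α * pd u 0 q) p) +
        ((((n : ℝ) - α) - (α + 1) * (rfun p / p 0) ^ 2 -
            β * (p 0 - rfun p) / p 0) / p 0) * pd u 0 p -
        ∑ a : Fin n, Da a (Da a u) p := by
  classical
  have htpos : 0 < p 0 := h0.trans hp
  have htr : 0 < p 0 - rfun p := sub_pos.mpr hp
  -- basic derivative facts for u
  have hud : Differentiable ℝ u := hu.differentiable (by norm_num)
  have huf : ContDiff ℝ 1 (fderiv ℝ u) := hu.fderiv_right (by norm_num)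
  have hHd : HasFDerivAt (fderiv ℝ u) (fderiv ℝ (fderiv ℝ u) p) p :=
    ((huf.differentiable (by norm_num)) p).hasFDerivAt
  set H := fderiv ℝ (fderiv ℝ u) p with hHdef
  have hsymm : ∀ v w, H v w = H w v :=
    second_derivative_symmetric (fun y => (hud y).hasFDerivAt) hHd
  have hpdu : ∀ v : Fin (n + 1) → ℝ,
      HasFDerivAt (fun q => fderiv ℝ u q v) (H.flip v) p := by
    intro v
    have h := hHd.clm_apply (hasFDerivAt_const v p)
    simpa using h
  -- coordinates of basis vectors
  have hs00 : (Pi.single (0 : Fin (n + 1)) (1 : ℝ) : Fin (n+1) → ℝ) 0 = 1 := by simp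
  have hs0s : ∀ a : Fin n, (Pi.single (0 : Fin (n + 1)) (1 : ℝ) : Fin (n+1) → ℝ) a.succ = 0 := by
    intro a; simp [Pi.single_eq_of_ne (Fin.succ_ne_zero a)]
  have hss0 : ∀ b : Fin n, (Pi.single (b.succ : Fin (n + 1)) (1 : ℝ) : Fin (n+1) → ℝ) 0 = 0 := by
    intro b; simp [Pi.single_eq_of_ne (Fin.succ_ne_zero b).symm]
  have hsss : ∀ a b : Fin n, (Pi.single (b.succ : Fin (n + 1)) (1 : ℝ) : Fin (n+1) → ℝ) a.succ
      = if a = b then 1 else 0 := by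
    intro a b
    by_cases h : a = b
    · subst h; simp
    · rw [if_neg h]
      exact Pi.single_eq_of_ne (fun hc => h (Fin.succ_injective _ hc)) 1
  -- derivative of rfun
  set Lr := ((1 / (2 * rfun p)) • ∑ a : Fin n, (2 * p a.succ) •
      (ContinuousLinearMap.proj a.succ : (Fin (n + 1) → ℝ) →L[ℝ] ℝ)) with hLrdef
  have hLr : HasFDerivAt rfun Lr p := hasFDerivAt_rfun p h0
  have hLr0 : Lr (Pi.single 0 1) = 0 := by
    simp [hLrdef, ContinuousLinearMap.sum_apply, hs0s]
  have hLrb : ∀ b : Fin n, Lr (Pi.single b.succ 1) = p b.succ / rfun p := by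
    intro b
    rw [hLrdef]
    simp only [ContinuousLinearMap.smul_apply, ContinuousLinearMap.sum_apply,
      ContinuousLinearMap.smul_apply, ContinuousLinearMap.proj_apply, hsss, smul_eq_mul,
      mul_ite, mul_one, mul_zero]
    rw [Finset.sum_ite_eq' Finset.univ b (fun a => 2 * p a.succ)]
    simp only [Finset.mem_univ, if_true]
    field_simp
  have hr2 : rfun p ^ 2 = ∑ a : Fin n, (p a.succ) ^ 2 :=
    Real.sq_sqrt (by positivity)
  -- weight function derivative
  have hW1 : HasFDerivAt (fun q : Fin (n + 1) → ℝ => (q 0 - rfun q) ^ β)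
      ((β * (p 0 - rfun p) ^ (β - 1)) •
        ((ContinuousLinearMap.proj 0 : (Fin (n + 1) → ℝ) →L[ℝ] ℝ) - Lr)) p :=
    ((hasFDerivAt_apply (𝕜 := ℝ) 0 p).sub hLr).rpow_const (Or.inl htr.ne')
  have hW2 : HasFDerivAt (fun q : Fin (n + 1) → ℝ => (q 0) ^ α)
      ((α * (p 0) ^ (α - 1)) •
        (ContinuousLinearMap.proj 0 : (Fin (n + 1) → ℝ) →L[ℝ] ℝ)) p :=
    (hasFDerivAt_apply (𝕜 := ℝ) 0 p).rpow_const (Or.inl htpos.ne')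
  have hWfd : HasFDerivAt
      (fun q : Fin (n + 1) → ℝ => (q 0 - rfun q) ^ β * q 0 ^ α * fderiv ℝ u q (Pi.single 0 1))
      (((p 0 - rfun p) ^ β * p 0 ^ α) • H.flip (Pi.single 0 1) +
        (fderiv ℝ u p (Pi.single 0 1)) •
          (((p 0 - rfun p) ^ β) • ((α * (p 0) ^ (α - 1)) •
              (ContinuousLinearMap.proj 0 : (Fin (n + 1) → ℝ) →L[ℝ] ℝ)) +
            (p 0 ^ α) • ((β * (p 0 - rfun p) ^ (β - 1)) •
              ((ContinuousLinearMap.proj 0 : (Fin (n + 1) → ℝ) →L[ℝ] ℝ) - Lr)))) p :=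
    (hW1.mul hW2).mul (hpdu (Pi.single 0 1))
  have hE1 : fderiv ℝ
      (fun q : Fin (n + 1) → ℝ => (q 0 - rfun q) ^ β * q 0 ^ α * fderiv ℝ u q (Pi.single 0 1))
      p (Pi.single 0 1)
      = (p 0 - rfun p) ^ β * p 0 ^ α * H (Pi.single 0 1) (Pi.single 0 1)
        + fderiv ℝ u p (Pi.single 0 1) *
          ((p 0 - rfun p) ^ β * (α * p 0 ^ (α - 1)) + p 0 ^ α * (β * (p 0 - rfun p) ^ (β - 1))) := by
    rw [hWfd.fderiv]
    simp only [ContinuousLinearMap.add_apply, ContinuousLinearMap.smul_apply,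
      ContinuousLinearMap.flip_apply, ContinuousLinearMap.coe_sub', Pi.sub_apply,
      ContinuousLinearMap.proj_apply, hLr0, hs00, smul_eq_mul]
    ring
  have hE2 : ∀ b : Fin n, fderiv ℝ
      (fun q : Fin (n + 1) → ℝ => (q 0 - rfun q) ^ β * q 0 ^ α * fderiv ℝ u q (Pi.single 0 1))
      p (Pi.single b.succ 1)
      = (p 0 - rfun p) ^ β * p 0 ^ α * H (Pi.single b.succ 1) (Pi.single 0 1)
        - fderiv ℝ u p (Pi.single 0 1) *
          (p 0 ^ α * (β * (p 0 - rfun p) ^ (β - 1)) * (p b.succ / rfun p)) := by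
    intro b
    rw [hWfd.fderiv]
    simp only [ContinuousLinearMap.add_apply, ContinuousLinearMap.smul_apply,
      ContinuousLinearMap.flip_apply, ContinuousLinearMap.coe_sub', Pi.sub_apply,
      ContinuousLinearMap.proj_apply, hLrb, hss0, smul_eq_mul]
    ring
  -- derivative of Da a u
  have hinv : HasFDerivAt (fun q : Fin (n + 1) → ℝ => (q 0)⁻¹)
      ((-((p 0) ^ 2)⁻¹) • (ContinuousLinearMap.proj 0 : (Fin (n + 1) → ℝ) →L[ℝ] ℝ)) p :=
    (hasDerivAt_inv htpos.ne').comp_hasFDerivAt p (hasFDerivAt_apply 0 p)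
  have hdiv : ∀ a : Fin n, HasFDerivAt (fun q : Fin (n + 1) → ℝ => q a.succ / q 0)
      (p a.succ • ((-((p 0) ^ 2)⁻¹) •
          (ContinuousLinearMap.proj 0 : (Fin (n + 1) → ℝ) →L[ℝ] ℝ)) +
        (p 0)⁻¹ • (ContinuousLinearMap.proj a.succ : (Fin (n + 1) → ℝ) →L[ℝ] ℝ)) p := by
    intro a
    have h := (hasFDerivAt_apply (𝕜 := ℝ) a.succ p).mul hinv
    have heq : (fun q : Fin (n + 1) → ℝ => q a.succ / q 0)
        = fun q => q a.succ * (q 0)⁻¹ := by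
      funext q; rw [div_eq_mul_inv]
    rw [heq]; exact h
  have hDaud : ∀ a : Fin n, HasFDerivAt (Da a u)
      ((p a.succ / p 0) • H.flip (Pi.single 0 1) +
        (fderiv ℝ u p (Pi.single 0 1)) •
          (p a.succ • ((-((p 0) ^ 2)⁻¹) •
              (ContinuousLinearMap.proj 0 : (Fin (n + 1) → ℝ) →L[ℝ] ℝ)) +
            (p 0)⁻¹ • (ContinuousLinearMap.proj a.succ : (Fin (n + 1) → ℝ) →L[ℝ] ℝ)) +
        H.flip (Pi.single a.succ 1)) p := by
    intro a
    exact ((hdiv a).mul (hpdu (Pi.single 0 1))).add (hpdu (Pi.single a.succ 1))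
  have hE4 : ∀ a : Fin n, fderiv ℝ (Da a u) p (Pi.single 0 1)
      = (p a.succ / p 0) * H (Pi.single 0 1) (Pi.single 0 1)
        - fderiv ℝ u p (Pi.single 0 1) * (p a.succ * ((p 0) ^ 2)⁻¹)
        + H (Pi.single a.succ 1) (Pi.single 0 1) := by
    intro a
    rw [(hDaud a).fderiv]
    simp only [ContinuousLinearMap.add_apply, ContinuousLinearMap.smul_apply,
      ContinuousLinearMap.flip_apply, ContinuousLinearMap.proj_apply, hs00, hs0s,
      smul_eq_mul]
    rw [hsymm (Pi.single 0 1) (Pi.single a.succ 1)]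
    ring
  have hE5 : ∀ a : Fin n, fderiv ℝ (Da a u) p (Pi.single a.succ 1)
      = (p a.succ / p 0) * H (Pi.single a.succ 1) (Pi.single 0 1)
        + fderiv ℝ u p (Pi.single 0 1) * (p 0)⁻¹
        + H (Pi.single a.succ 1) (Pi.single a.succ 1) := by
    intro a
    rw [(hDaud a).fderiv]
    simp only [ContinuousLinearMap.add_apply, ContinuousLinearMap.smul_apply,
      ContinuousLinearMap.flip_apply, ContinuousLinearMap.proj_apply, hss0, hsss,
      smul_eq_mul, eq_self_iff_true, if_true]
    ring
  -- second derivatives for Box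
  have hBox0 : fderiv ℝ (pd u 0) p (Pi.single 0 1)
      = H (Pi.single 0 1) (Pi.single 0 1) := by
    rw [show pd u 0 = fun q => fderiv ℝ u q (Pi.single 0 1) from rfl,
      (hpdu (Pi.single 0 1)).fderiv]
    simp
  have hBoxa : ∀ a : Fin n, fderiv ℝ (pd u a.succ) p (Pi.single a.succ 1)
      = H (Pi.single a.succ 1) (Pi.single a.succ 1) := by
    intro a
    rw [show pd u a.succ = fun q => fderiv ℝ u q (Pi.single a.succ 1) from rfl,
      (hpdu (Pi.single a.succ 1)).fderiv]
    simp
  simp only [Box, Da, pd]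
  rw [hBox0]
  simp only [hBoxa, hE1, hE2, hE4, hE5]
  set T := p 0 with hT
  set R := rfun p with hR
  set ut := fderiv ℝ u p (Pi.single 0 1) with hut
  set Htt := H (Pi.single 0 1) (Pi.single 0 1) with hHtt
  set W1 := (T - R) ^ β with hW1def
  set W2 := T ^ α with hW2def
  have hTne : T ≠ 0 := htpos.ne'
  have hRne : R ≠ 0 := h0.ne'
  have hTRne : T - R ≠ 0 := htr.ne'
  have hW1ne : W1 ≠ 0 := (Real.rpow_pos_of_pos htr β).ne'
  have hW2ne : W2 ≠ 0 := (Real.rpow_pos_of_pos htpos α).ne'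
  have hsum1 :
      ∑ x : Fin n, 2 * p x.succ / T *
          (p x.succ / T *
              (W1 * W2 * Htt + ut * (W1 * (α * T ^ (α - 1)) + W2 * (β * (T - R) ^ (β - 1)))) +
            (W1 * W2 * H (Pi.single x.succ 1) (Pi.single 0 1) -
              ut * (W2 * (β * (T - R) ^ (β - 1)) * (p x.succ / R))))
        = (2 * (W1 * W2 * Htt + ut * (W1 * (α * T ^ (α - 1)) + W2 * (β * (T - R) ^ (β - 1)))) / T ^ 2) * R ^ 2
          + (2 * W1 * W2 / T) *
              (∑ x : Fin n, p x.succ * H (Pi.single x.succ 1) (Pi.single 0 1))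
          - (2 * ut * W2 * (β * (T - R) ^ (β - 1)) / (T * R)) * R ^ 2 := by
    simp only [hr2, Finset.mul_sum]
    rw [← Finset.sum_add_distrib, ← Finset.sum_sub_distrib]
    apply Finset.sum_congr rfl
    intro a _
    field_simp
    ring
  have hsum2 :
      ∑ x : Fin n,
          (p x.succ / T *
              (p x.succ / T * Htt - ut * (p x.succ * (T ^ 2)⁻¹) +
                H (Pi.single x.succ 1) (Pi.single 0 1)) +
            (p x.succ / T * H (Pi.single x.succ 1) (Pi.single 0 1) + ut * T⁻¹ +
              H (Pi.single x.succ 1) (Pi.single x.succ 1)))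
        = (Htt / T ^ 2) * R ^ 2 - (ut / T ^ 3) * R ^ 2
          + (2 / T) * (∑ x : Fin n, p x.succ * H (Pi.single x.succ 1) (Pi.single 0 1))
          + (n : ℝ) * (ut / T)
          + ∑ x : Fin n, H (Pi.single x.succ 1) (Pi.single x.succ 1) := by
    have hconst : (n : ℝ) * (ut / T) = ∑ _x : Fin n, ut / T := by
      simp [Finset.sum_const, nsmul_eq_mul]
    simp only [hr2, Finset.mul_sum, hconst]
    rw [← Finset.sum_sub_distrib, ← Finset.sum_add_distrib, ← Finset.sum_add_distrib,
      ← Finset.sum_add_distrib]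
    apply Finset.sum_congr rfl
    intro a _
    field_simp
    ring
  rw [hsum1, hsum2]
  have hn1 : (T - R) ^ (-β) = W1⁻¹ := by rw [hW1def, Real.rpow_neg htr.le]
  have hn2 : T ^ (-α) = W2⁻¹ := by rw [hW2def, Real.rpow_neg htpos.le]
  have hb1 : (T - R) ^ (β - 1) = W1 / (T - R) := by
    rw [hW1def, Real.rpow_sub htr, Real.rpow_one]
  have ha1 : T ^ (α - 1) = W2 / T := by rw [hW2def, Real.rpow_sub htpos, Real.rpow_one]
  rw [hn1, hn2]
  simp only [hb1, ha1]
  field_simp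
  ring
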